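/- Let N = N(s_0 | a_1/b_1, …, a_m/b_m) be an n×n star-shaped intersection matrix built from an integer s_0 ≥ 1 and m ≥ 3 Hirzebruch–Jung chain matrices N_1, …, N_m with associated data (a_j, b_j, R_j). Let w_j denote the terminal vertex of the j-th chain. Then: (1) the discriminant group Φ_N is generated by the classes of e_{w_1}, …, e_{w_m}; (2) for each j the class of e_{v_0} equals the class of a_j·e_{w_j} in Φ_N; and (3) the group Φ_N is killed by lcm(a_1,…,a_m)^2·(s_0 − Σ_{j=1}^m b_j/a_j). -/

import Mathlib

open Matrix BigOperators

def chainS (d : ℕ → ℤ) : ℕ → ℤ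
  | 0 => 1
  | 1 => -d 0
  | (k+2) => -(d (k+1) * chainS d (k+1) + chainS d k)

lemma tri_row {n : ℕ} (A : Matrix (Fin (n+1)) (Fin (n+1)) ℤ)
    (hoff : ∀ i i' : Fin (n+1), i ≠ i' → (i:ℕ)+1 ≠ (i':ℕ) → (i':ℕ)+1 ≠ (i:ℕ) → A i i' = 0)
    (v : Fin (n+1) → ℤ) (i : Fin (n+1)) :
    A.mulVec v i =
      (if h : 0 < (i:ℕ) then A i ⟨(i:ℕ)-1, by omega⟩ * v ⟨(i:ℕ)-1, by omega⟩ else 0)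
      + A i i * v i
      + (if h : (i:ℕ) < n then A i ⟨(i:ℕ)+1, by omega⟩ * v ⟨(i:ℕ)+1, by omega⟩ else 0) := by
  have hs : A.mulVec v i = ∑ i', A i i' * v i' := by
    simp [Matrix.mulVec, dotProduct]
  have key : ∀ i' ∈ (Finset.univ : Finset (Fin (n+1))), A i i' * v i' =
      (if (i':ℕ)+1 = (i:ℕ) then A i i' * v i' else 0)
      + (if i' = i then A i i' * v i' else 0)
      + (if (i:ℕ)+1 = (i':ℕ) then A i i' * v i' else 0) := by
    intro i' _
    by_cases c1 : (i':ℕ)+1 = (i:ℕ)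
    · have c2 : i' ≠ i := by intro h; rw [h] at c1; omega
      have c3 : ¬ ((i:ℕ)+1 = (i':ℕ)) := by omega
      simp [c1, c2, c3]
    · by_cases c2 : i' = i
      · have c3 : ¬ ((i:ℕ)+1 = (i':ℕ)) := by rw [c2]; omega
        simp [c1, c2, c3]
      · by_cases c3 : (i:ℕ)+1 = (i':ℕ)
        · simp [c1, c2, c3]
        · have h0 : A i i' = 0 := hoff i i' (Ne.symm c2) c3 c1
          simp [c1, c2, c3, h0]
  rw [hs, Finset.sum_congr rfl key, Finset.sum_add_distrib, Finset.sum_add_distrib]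
  congr 1
  · congr 1
    · by_cases h1 : 0 < (i:ℕ)
      · rw [dif_pos h1]
        rw [Finset.sum_eq_single_of_mem (⟨(i:ℕ)-1, by omega⟩ : Fin (n+1)) (Finset.mem_univ _)]
        · rw [if_pos (by simp; omega)]
        · intro b _ hb
          rw [if_neg]
          intro hc
          apply hb
          apply Fin.ext
          simp
          omega
      · rw [dif_neg h1]
        apply Finset.sum_eq_zero
        intro b _
        rw [if_neg]; omega
    · rw [Finset.sum_ite_eq' Finset.univ i fun i' => A i i' * v i']
      simp
  · by_cases h2 : (i:ℕ) < n
    · rw [dif_pos h2]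
      rw [Finset.sum_eq_single_of_mem (⟨(i:ℕ)+1, by omega⟩ : Fin (n+1)) (Finset.mem_univ _)]
      · rw [if_pos (by simp)]
      · intro b _ hb
        rw [if_neg]
        intro hc
        apply hb
        apply Fin.ext
        simp
        omega
    · rw [dif_neg h2]
      apply Finset.sum_eq_zero
      intro b _
      rw [if_neg]
      have := b.isLt; omega

set_option maxHeartbeats 4000000 in
/-- **Star-shaped intersection matrices: generators of the discriminant group.**
Let `N = N(s₀ | a₁/b₁, …, a_m/b_m)` be a star-shaped intersection matrix, and let `w_j` be the
terminal vertex of the `j`-th chain.  Then the discriminant group `Φ_N` is generated by the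
classes of the `e_{w_j}`; the class of `e_{v₀}` equals the class of `a_j·e_{w_j}` for each `j`;
and `Φ_N` is killed by `lcm(a₁,…,a_m)²·(s₀ − Σ b_j/a_j)`. -/
theorem star_shaped_generators
    (m : ℕ) (hm : 3 ≤ m)
    (ℓ : Fin m → ℕ)
    (M : ∀ j : Fin m, Matrix (Fin (ℓ j + 1)) (Fin (ℓ j + 1)) ℤ)
    (hMdiag : ∀ j i, M j i i ≤ -2)
    (hMadj : ∀ (j : Fin m) (i i' : Fin (ℓ j + 1)),
      ((i : ℕ) + 1 = (i' : ℕ) ∨ (i' : ℕ) + 1 = (i : ℕ)) → M j i i' = 1)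
    (hMoff : ∀ (j : Fin m) (i i' : Fin (ℓ j + 1)),
      i ≠ i' → (i : ℕ) + 1 ≠ (i' : ℕ) → (i' : ℕ) + 1 ≠ (i : ℕ) → M j i i' = 0)
    (a : Fin m → ℤ) (ha : ∀ j, 1 ≤ a j)
    (R : ∀ j : Fin m, Fin (ℓ j + 1) → ℤ)
    (hRpos : ∀ j i, 0 < R j i)
    (hRlast : ∀ j, R j (Fin.last (ℓ j)) = 1)
    (hRrel : ∀ j, (M j).mulVec (R j) = fun i => if i = 0 then -(a j) else 0)
    (s₀ : ℤ) (hs₀ : 1 ≤ s₀)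
    (N : Matrix (Option ((j : Fin m) × Fin (ℓ j + 1)))
                (Option ((j : Fin m) × Fin (ℓ j + 1))) ℤ)
    (hN₀ : N none none = -s₀)
    (hN₁ : ∀ (j : Fin m) (i : Fin (ℓ j + 1)),
      N none (some ⟨j, i⟩) = if i = 0 then 1 else 0)
    (hN₂ : ∀ (j : Fin m) (i : Fin (ℓ j + 1)),
      N (some ⟨j, i⟩) none = if i = 0 then 1 else 0)
    (hN₃ : ∀ (j : Fin m) (i i' : Fin (ℓ j + 1)),
      N (some ⟨j, i⟩) (some ⟨j, i'⟩) = M j i i')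
    (hN₄ : ∀ (j j' : Fin m) (i : Fin (ℓ j + 1)) (i' : Fin (ℓ j' + 1)),
      j ≠ j' → N (some ⟨j, i⟩) (some ⟨j', i'⟩) = 0)
    (hNdef : ∀ v : Option ((j : Fin m) × Fin (ℓ j + 1)) → ℚ, v ≠ 0 →
      v ⬝ᵥ (N.map (Int.cast : ℤ → ℚ)).mulVec v < 0) :
    (Submodule.span ℤ (Set.range fun j : Fin m =>
        (Submodule.Quotient.mk
            (Pi.single (some ⟨j, Fin.last (ℓ j)⟩ : Option ((j : Fin m) × Fin (ℓ j + 1))) (1 : ℤ)) :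
          (Option ((j : Fin m) × Fin (ℓ j + 1)) → ℤ) ⧸ LinearMap.range N.mulVecLin)) = ⊤) ∧
    (∀ j : Fin m,
      (Submodule.Quotient.mk
          (Pi.single (none : Option ((j : Fin m) × Fin (ℓ j + 1))) (1 : ℤ)) :
        (Option ((j : Fin m) × Fin (ℓ j + 1)) → ℤ) ⧸ LinearMap.range N.mulVecLin) =
      a j • Submodule.Quotient.mk
          (Pi.single (some ⟨j, Fin.last (ℓ j)⟩ : Option ((j : Fin m) × Fin (ℓ j + 1))) (1 : ℤ))) ∧
    (∃ c : ℤ, (c : ℚ) = ((Finset.univ.lcm a : ℤ) : ℚ) ^ 2 *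
        ((s₀ : ℚ) - ∑ j, (R j 0 : ℚ) / (a j : ℚ)) ∧
      ∀ x : (Option ((j : Fin m) × Fin (ℓ j + 1)) → ℤ) ⧸ LinearMap.range N.mulVecLin,
        c • x = 0) := by
  classical
  set Φ := (Option ((j : Fin m) × Fin (ℓ j + 1)) → ℤ) ⧸ LinearMap.range N.mulVecLin with hΦdef
  set E : Option ((j : Fin m) × Fin (ℓ j + 1)) → Φ :=
    fun v => Submodule.Quotient.mk (Pi.single v 1) with hEdef
  have hMsymm : ∀ (j : Fin m) (i i' : Fin (ℓ j + 1)), M j i i' = M j i' i := by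
    intro j i i'
    by_cases h : i = i'
    · rw [h]
    · by_cases h1 : (i:ℕ)+1 = (i':ℕ)
      · rw [hMadj j i i' (Or.inl h1), hMadj j i' i (Or.inr h1)]
      · by_cases h2 : (i':ℕ)+1 = (i:ℕ)
        · rw [hMadj j i i' (Or.inr h2), hMadj j i' i (Or.inl h2)]
        · rw [hMoff j i i' h h1 h2, hMoff j i' i (Ne.symm h) h2 h1]
  have hsingle : ∀ (k' : Fin m) (i' : Fin (ℓ k' + 1)) (k : Fin m) (i : Fin (ℓ k + 1)),
      Pi.single (M := fun _ : Option ((j : Fin m) × Fin (ℓ j + 1)) => ℤ)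
        (some ⟨k', i'⟩) (1:ℤ) (some ⟨k, i⟩)
      = if k = k' ∧ (i:ℕ) = (i':ℕ) then 1 else 0 := by
    intro k' i' k i
    rw [Pi.single_apply]
    by_cases hc : k = k' ∧ (i:ℕ) = (i':ℕ)
    · obtain ⟨h1, h2⟩ := hc
      subst h1
      have h3 : i = i' := Fin.ext h2
      subst h3
      simp
    · rw [if_neg hc, if_neg]
      intro he
      have h1 : k = k' := congrArg Sigma.fst (Option.some.inj he)
      subst h1
      have h2 : i = i' := by
        have := Option.some.inj he
        simpa using this
      exact hc ⟨rfl, by rw [h2]⟩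
  have hmul_none : ∀ u : Option ((j : Fin m) × Fin (ℓ j + 1)) → ℤ,
      N.mulVec u none = -s₀ * u none + ∑ k, u (some ⟨k, 0⟩) := by
    intro u
    have hs : N.mulVec u none = ∑ v, N none v * u v := by
      simp [Matrix.mulVec, dotProduct]
    rw [hs, Fintype.sum_option, ← Finset.univ_sigma_univ, Finset.sum_sigma, hN₀]
    congr 1
    apply Finset.sum_congr rfl
    intro k _
    simp only [hN₁, ite_mul, one_mul, zero_mul]
    rw [Finset.sum_ite_eq' Finset.univ (0 : Fin (ℓ k + 1)) (fun i => u (some ⟨k, i⟩))]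
    simp
  have hmul_some : ∀ (u : Option ((j : Fin m) × Fin (ℓ j + 1)) → ℤ) (k : Fin m) (i : Fin (ℓ k + 1)),
      N.mulVec u (some ⟨k, i⟩) =
        (if i = 0 then u none else 0) + (M k).mulVec (fun i' => u (some ⟨k, i'⟩)) i := by
    intro u k i
    have hs : N.mulVec u (some ⟨k, i⟩) = ∑ v, N (some ⟨k, i⟩) v * u v := by
      simp [Matrix.mulVec, dotProduct]
    rw [hs, Fintype.sum_option, ← Finset.univ_sigma_univ, Finset.sum_sigma, hN₂]
    congr 1
    · rw [ite_mul, one_mul, zero_mul]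
    · rw [Finset.sum_eq_single k]
      · simp [hN₃, Matrix.mulVec, dotProduct]
      · intro k' _ hk'
        apply Finset.sum_eq_zero
        intro i' _
        rw [hN₄ k k' i i' (Ne.symm hk'), zero_mul]
      · intro h
        exact absurd (Finset.mem_univ k) h
  have hdiff : ∀ x y : Option ((j : Fin m) × Fin (ℓ j + 1)) → ℤ,
      (∃ u, N.mulVec u = x - y) →
      (Submodule.Quotient.mk x : Φ) = Submodule.Quotient.mk y := by
    intro x y ⟨u, hu⟩
    refine (Submodule.Quotient.eq _).mpr ?_
    exact ⟨u, by rw [Matrix.mulVecLin_apply, hu]⟩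
  have relS : ∀ j : Fin m, E none = a j • E (some ⟨j, Fin.last (ℓ j)⟩) := by
    intro j
    simp only [hEdef]
    set d : ℕ → ℤ := fun t => if h : t < ℓ j + 1 then M j ⟨t, h⟩ ⟨t, h⟩ else 0 with hd
    set S : Fin (ℓ j + 1) → ℤ := fun i => chainS d i.val with hSdef
    have hrec : ∀ t, chainS d (t+2) = -(d (t+1) * chainS d (t+1) + chainS d t) := fun t => rfl
    have hd_eq : ∀ i : Fin (ℓ j + 1), d (i:ℕ) = M j i i := by
      intro i
      simp only [hd, dif_pos i.isLt]
    have hMS0 : ∀ i : Fin (ℓ j + 1), i ≠ Fin.last (ℓ j) → (M j).mulVec S i = 0 := by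
      intro i hi
      have hlt : (i:ℕ) < ℓ j := by
        have h1 := i.isLt
        have h2 : (i:ℕ) ≠ ℓ j := fun h => hi (Fin.ext (by simp [Fin.last, h]))
        omega
      rw [tri_row (M j) (hMoff j) S i, dif_pos hlt]
      have e_up : M j i ⟨(i:ℕ)+1, by omega⟩ = 1 := hMadj j i _ (Or.inl (by simp))
      by_cases h0 : 0 < (i:ℕ)
      · rw [dif_pos h0, e_up]
        have e_dn : M j i ⟨(i:ℕ)-1, by omega⟩ = 1 := hMadj j i _ (Or.inr (by simp; omega))
        rw [e_dn]
        obtain ⟨t, ht⟩ : ∃ t, (i:ℕ) = t + 1 := ⟨(i:ℕ) - 1, by omega⟩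
        have hMii : M j i i = d (t+1) := by rw [← hd_eq i, ht]
        have hv1 : S ⟨(i:ℕ)-1, by omega⟩ = chainS d t := by simp [hSdef, ht]
        have hv2 : S i = chainS d (t+1) := by simp [hSdef, ht]
        have hv3 : S ⟨(i:ℕ)+1, by omega⟩ = chainS d (t+2) := by simp [hSdef, ht]
        rw [hMii, hv1, hv2, hv3, hrec t]
        ring
      · have h0' : (i:ℕ) = 0 := by omega
        rw [dif_neg h0, e_up]
        have hMii : M j i i = d 0 := by rw [← hd_eq i, h0']
        have hv2 : S i = 1 := by simp [hSdef, h0', chainS]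
        have hv3 : S ⟨(i:ℕ)+1, by omega⟩ = -(d 0) := by simp [hSdef, h0', chainS]
        rw [hMii, hv2, hv3]
        ring
    have hS0 : S 0 = 1 := by
      have : ((0 : Fin (ℓ j + 1)) : ℕ) = 0 := rfl
      simp [hSdef, this, chainS]
    have hT : (M j)ᵀ = M j := by
      ext i i'
      exact hMsymm j i' i
    have pair : R j ⬝ᵥ (M j).mulVec S = S ⬝ᵥ (M j).mulVec (R j) := by
      rw [Matrix.dotProduct_mulVec, ← Matrix.mulVec_transpose, hT, dotProduct_comm]
    have hMSlast : (M j).mulVec S (Fin.last (ℓ j)) = -(a j) := by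
      have lhs : R j ⬝ᵥ (M j).mulVec S = (M j).mulVec S (Fin.last (ℓ j)) := by
        rw [dotProduct]
        rw [Finset.sum_eq_single (Fin.last (ℓ j))]
        · rw [hRlast, one_mul]
        · intro i _ hi
          rw [hMS0 i hi, mul_zero]
        · intro h
          exact absurd (Finset.mem_univ _) h
      have rhs : S ⬝ᵥ (M j).mulVec (R j) = -(a j) := by
        rw [hRrel j, dotProduct]
        simp only [mul_ite, mul_zero]
        rw [Finset.sum_ite_eq' Finset.univ (0 : Fin (ℓ j + 1)) (fun i => S i * -(a j))]
        simp [hS0]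
      rw [← lhs, pair, rhs]
    have hMS : ∀ i, (M j).mulVec S i = if i = Fin.last (ℓ j) then -(a j) else 0 := by
      intro i
      by_cases h : i = Fin.last (ℓ j)
      · rw [h, if_pos rfl, hMSlast]
      · rw [if_neg h, hMS0 i h]
    -- the extension vector
    set u : Option ((j : Fin m) × Fin (ℓ j + 1)) → ℤ := fun v =>
      match v with
      | none => 0
      | some ⟨k, i⟩ => if k = j then chainS d (i:ℕ) else 0 with hu
    rw [← Submodule.Quotient.mk_smul]
    apply hdiff
    refine ⟨u, ?_⟩
    funext v
    match v with
    | none =>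
      rw [hmul_none]
      have h1 : u none = 0 := rfl
      have h2 : ∀ k : Fin m, u (some ⟨k, 0⟩) = if k = j then 1 else 0 := by
        intro k
        show (if k = j then chainS d ((0 : Fin (ℓ k + 1)):ℕ) else 0) = _
        simp [chainS]
      simp only [h1, h2, mul_zero, Finset.sum_ite_eq' Finset.univ j (fun _ => (1:ℤ))]
      simp only [Pi.sub_apply, Pi.smul_apply, Pi.single_eq_same, smul_eq_mul]
      rw [Pi.single_apply]
      simp
    | some ⟨k, i⟩ =>
      rw [hmul_some]
      have h1 : u none = 0 := rfl
      rw [h1, ite_self]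
      by_cases hk : k = j
      · subst hk
        have hfun : (fun i' => u (some ⟨k, i'⟩)) = S := by
          funext i'
          show (if k = k then chainS d (i':ℕ) else 0) = _
          simp [hSdef]
        rw [hfun, zero_add, hMS i]
        have h2 : Pi.single (M := fun _ : Option ((j : Fin m) × Fin (ℓ j + 1)) => ℤ)
            none (1:ℤ) (some ⟨k, i⟩) = 0 := by
          rw [Pi.single_apply, if_neg (by simp)]
        simp only [Pi.sub_apply, Pi.smul_apply, smul_eq_mul, h2]
        rw [hsingle]
        by_cases hl : i = Fin.last (ℓ k)
        · rw [if_pos hl, if_pos ⟨rfl, by rw [hl]⟩]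
          ring
        · rw [if_neg hl, if_neg]
          · ring
          · rintro ⟨-, h⟩
            exact hl (Fin.ext (by simpa [Fin.last] using h))
      · have hfun : (fun i' => u (some ⟨k, i'⟩)) = (fun _ => (0:ℤ)) := by
          funext i'
          show (if k = j then chainS d (i':ℕ) else 0) = _
          rw [if_neg hk]
        rw [hfun, zero_add]
        have hz : (M k).mulVec (fun _ => (0:ℤ)) i = 0 := by
          simp [Matrix.mulVec, dotProduct]
        rw [hz]
        have h2 : Pi.single (M := fun _ : Option ((j : Fin m) × Fin (ℓ j + 1)) => ℤ)
            none (1:ℤ) (some ⟨k, i⟩) = 0 := by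
          rw [Pi.single_apply, if_neg (by simp)]
        simp only [Pi.sub_apply, Pi.smul_apply, smul_eq_mul, h2]
        rw [hsingle, if_neg (by rintro ⟨h, -⟩; exact hk h)]
        ring
  have hnone_single : ∀ (k : Fin m) (i : Fin (ℓ k + 1)),
      Pi.single (M := fun _ : Option ((j : Fin m) × Fin (ℓ j + 1)) => ℤ)
        (none : Option ((j : Fin m) × Fin (ℓ j + 1))) (1:ℤ) (some ⟨k, i⟩) = 0 := by
    intro k i
    rw [Pi.single_apply, if_neg (by simp)]
  have rel0 : s₀ • E none = ∑ k, E (some ⟨k, 0⟩) := by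
    simp only [hEdef]
    rw [← Submodule.Quotient.mk_smul]
    have hsum : (∑ k, (Submodule.Quotient.mk (Pi.single (some ⟨k, 0⟩) 1) :
        (Option ((j : Fin m) × Fin (ℓ j + 1)) → ℤ) ⧸ LinearMap.range N.mulVecLin)) =
        Submodule.Quotient.mk (∑ k, Pi.single (some ⟨k, (0 : Fin (ℓ k + 1))⟩) (1:ℤ)) := by
      rw [show (Submodule.Quotient.mk : (Option ((j : Fin m) × Fin (ℓ j + 1)) → ℤ) →
        (Option ((j : Fin m) × Fin (ℓ j + 1)) → ℤ) ⧸ LinearMap.range N.mulVecLin) =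
        (LinearMap.range N.mulVecLin).mkQ from rfl, map_sum]
    rw [hsum]
    apply hdiff
    refine ⟨(fun v => Option.casesOn v (-1) (fun _ => 0)), ?_⟩
    funext v
    match v with
    | none =>
      rw [hmul_none]
      show -s₀ * (-1) + (∑ _k : Fin m, (0:ℤ)) = _
      simp only [Finset.sum_const_zero, add_zero]
      simp only [Pi.sub_apply, Pi.smul_apply, Pi.single_eq_same, smul_eq_mul, Finset.sum_apply]
      have h3 : ∀ k : Fin m, Pi.single (M := fun _ : Option ((j : Fin m) × Fin (ℓ j + 1)) => ℤ)
          (some ⟨k, (0 : Fin (ℓ k + 1))⟩) (1:ℤ) none = 0 := by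
        intro k
        rw [Pi.single_apply, if_neg (by simp)]
      simp only [h3, Finset.sum_const_zero]
      ring
    | some ⟨k, i⟩ =>
      rw [hmul_some]
      show (if i = 0 then (-1:ℤ) else 0) + (M k).mulVec (fun _ => (0:ℤ)) i = _
      have hz : (M k).mulVec (fun _ => (0:ℤ)) i = 0 := by
        simp [Matrix.mulVec, dotProduct]
      rw [hz, add_zero]
      simp only [Pi.sub_apply, Pi.smul_apply, smul_eq_mul, hnone_single, mul_zero,
        Finset.sum_apply]
      simp only [hsingle]
      by_cases hi0 : (i:ℕ) = 0
      · have hi0' : i = 0 := Fin.ext hi0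
        have hsum0 : (∑ k' : Fin m, if k = k' ∧ (i:ℕ) = ((0 : Fin (ℓ k' + 1)):ℕ) then (1:ℤ) else 0) = 1 := by
          simp only [Fin.val_zero, hi0, and_true]
          rw [Finset.sum_ite_eq Finset.univ k (fun _ => (1:ℤ))]
          simp
        rw [hsum0, if_pos hi0']
        ring
      · have hi0' : ¬ i = 0 := fun h => hi0 (by rw [h]; rfl)
        have hsum0 : (∑ k' : Fin m, if k = k' ∧ (i:ℕ) = ((0 : Fin (ℓ k' + 1)):ℕ) then (1:ℤ) else 0) = 0 := by
          apply Finset.sum_eq_zero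
          intro k' _
          rw [if_neg (by simp; intro _; omega)]
        rw [hsum0, if_neg hi0']
        ring
  have hsome_none : ∀ (k : Fin m) (i : Fin (ℓ k + 1)),
      Pi.single (M := fun _ : Option ((j : Fin m) × Fin (ℓ j + 1)) => ℤ)
        (some ⟨k, i⟩) (1:ℤ) (none : Option ((j : Fin m) × Fin (ℓ j + 1))) = 0 := by
    intro k i
    rw [Pi.single_apply, if_neg (by simp)]
  have relR : ∀ k : Fin m, a k • E (some ⟨k, 0⟩) = R k 0 • E none := by
    intro k
    simp only [hEdef]
    rw [← Submodule.Quotient.mk_smul, ← Submodule.Quotient.mk_smul]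
    set uR : Option ((j : Fin m) × Fin (ℓ j + 1)) → ℤ := fun v =>
      match v with
      | none => 0
      | some ⟨k', i'⟩ => if h : k' = k then R k (Fin.cast (by rw [h]) i') else 0 with huR
    refine ((hdiff _ _) ⟨uR, ?_⟩).symm
    funext v
    match v with
    | none =>
      rw [hmul_none]
      have h1 : uR none = 0 := rfl
      have h2 : ∀ k' : Fin m, uR (some ⟨k', 0⟩) = if k' = k then R k 0 else 0 := by
        intro k'
        show (if h : k' = k then R k (Fin.cast (by rw [h]) (0 : Fin (ℓ k' + 1))) else 0) = _
        by_cases h : k' = k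
        · subst h
          rw [dif_pos rfl, if_pos rfl]
          congr 1
        · rw [dif_neg h, if_neg h]
      simp only [h1, h2, mul_zero, zero_add]
      rw [Finset.sum_ite_eq' Finset.univ k (fun _ => R k 0)]
      simp only [Finset.mem_univ, if_true]
      simp only [Pi.sub_apply, Pi.smul_apply, smul_eq_mul, Pi.single_eq_same, hsome_none,
        mul_zero, mul_one, sub_zero]
    | some ⟨k', i⟩ =>
      rw [hmul_some]
      have h1 : uR none = 0 := rfl
      rw [h1, ite_self]
      by_cases hk : k' = k
      · subst hk
        have hfun : (fun i' => uR (some ⟨k', i'⟩)) = R k' := by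
          funext i'
          show (if h : k' = k' then R k' (Fin.cast (by rw [h]) i') else 0) = _
          rw [dif_pos rfl]
          congr 1
        rw [hfun, zero_add, hRrel k']
        simp only [Pi.sub_apply, Pi.smul_apply, smul_eq_mul, hnone_single, mul_zero,
          zero_sub, hsingle]
        by_cases hi0 : (i:ℕ) = 0
        · have hi0' : i = 0 := Fin.ext hi0
          rw [if_pos hi0', if_pos (by simp [hi0])]
          ring
        · have hi0' : ¬ i = 0 := fun h => hi0 (by rw [h]; rfl)
          rw [if_neg hi0', if_neg (by simp [hi0])]
          ring
      · have hfun : (fun i' => uR (some ⟨k', i'⟩)) = (fun _ => (0:ℤ)) := by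
          funext i'
          show (if h : k' = k then R k (Fin.cast (by rw [h]) i') else 0) = _
          rw [dif_neg hk]
        rw [hfun, zero_add]
        have hz : (M k').mulVec (fun _ => (0:ℤ)) i = 0 := by
          simp [Matrix.mulVec, dotProduct]
        rw [hz]
        simp only [Pi.sub_apply, Pi.smul_apply, smul_eq_mul, hnone_single, mul_zero,
          zero_sub, hsingle]
        rw [if_neg (by rintro ⟨h, -⟩; exact hk h)]
        ring
  have hspan : Submodule.span ℤ
      (Set.range fun j : Fin m => E (some ⟨j, Fin.last (ℓ j)⟩)) = ⊤ := by
    set G := Submodule.span ℤ (Set.range fun j : Fin m => E (some ⟨j, Fin.last (ℓ j)⟩)) with hG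
    have hcol : ∀ w : Option ((j : Fin m) × Fin (ℓ j + 1)),
        N.mulVec (Pi.single w (1:ℤ)) = fun v => N v w := by
      intro w
      funext v
      simp [Matrix.mulVec, dotProduct, Pi.single_apply, mul_ite, Finset.sum_ite_eq']
    have hcol0 : ∀ w, (Submodule.Quotient.mk (fun v => N v w) : Φ) = 0 := by
      intro w
      rw [Submodule.Quotient.mk_eq_zero]
      exact ⟨Pi.single w 1, by rw [Matrix.mulVecLin_apply, hcol]⟩
    -- the step lemma
    have hstep : ∀ (k : Fin m) (i : Fin (ℓ k + 1)) (hi : (i:ℕ) < ℓ k),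
        E (some ⟨k, ⟨(i:ℕ)+1, by omega⟩⟩) ∈ G →
        (∀ i₂ : Fin (ℓ k + 1), (i₂:ℕ) = (i:ℕ)+2 → E (some ⟨k, i₂⟩) ∈ G) →
        E (some ⟨k, i⟩) ∈ G := by
      intro k i hi h1 h2
      set i₁ : Fin (ℓ k + 1) := ⟨(i:ℕ)+1, by omega⟩ with hi₁
      have hcol_eq : (fun v => N v (some ⟨k, i₁⟩)) =
          Pi.single (some ⟨k, i⟩ : Option ((j : Fin m) × Fin (ℓ j + 1))) (1:ℤ)
          + (M k i₁ i₁) • Pi.single (some ⟨k, i₁⟩ : Option ((j : Fin m) × Fin (ℓ j + 1))) (1:ℤ)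
          + (if h2 : (i:ℕ)+2 ≤ ℓ k then
              Pi.single (some ⟨k, ⟨(i:ℕ)+2, by omega⟩⟩ : Option ((j : Fin m) × Fin (ℓ j + 1))) (1:ℤ)
            else 0) := by
        funext v
        simp only [Pi.add_apply, Pi.smul_apply, smul_eq_mul]
        match v with
        | none =>
          rw [hN₁, if_neg (by intro h; have := congrArg Fin.val h; simp [hi₁] at this),
            hsome_none, hsome_none]
          by_cases hc : (i:ℕ)+2 ≤ ℓ k
          · rw [dif_pos hc, hsome_none]
            ring
          · rw [dif_neg hc]
            simp
        | some ⟨k', i'⟩ =>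
          by_cases hk : k' = k
          · subst hk
            rw [hN₃, hsingle, hsingle]
            by_cases c1 : (i':ℕ) = (i:ℕ)
            · rw [hMadj k' i' i₁ (Or.inl (by simp [hi₁, c1])), if_pos ⟨rfl, c1⟩,
                if_neg (by simp [hi₁] <;> omega)]
              by_cases hc : (i:ℕ)+2 ≤ ℓ k'
              · rw [dif_pos hc, hsingle, if_neg (by simp <;> omega)]
                ring
              · rw [dif_neg hc]
                simp
            · by_cases c2 : (i':ℕ) = (i:ℕ)+1
              · have : i' = i₁ := Fin.ext (by simp [hi₁, c2])
                subst this
                rw [if_neg (by simp <;> omega), if_pos ⟨rfl, rfl⟩]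
                by_cases hc : (i:ℕ)+2 ≤ ℓ k'
                · rw [dif_pos hc, hsingle, if_neg (by simp [hi₁] <;> omega)]
                  ring
                · rw [dif_neg hc]
                  simp
              · by_cases c3 : (i':ℕ) = (i:ℕ)+2
                · have hc : (i:ℕ)+2 ≤ ℓ k' := by have := i'.isLt; omega
                  rw [hMadj k' i' i₁ (Or.inr (by simp [hi₁] <;> omega)), if_neg (by simp <;> omega),
                    if_neg (by simp [hi₁] <;> omega), dif_pos hc, hsingle, if_pos ⟨rfl, by simp [c3]⟩]
                  ring
                · rw [hMoff k' i' i₁ (by intro h; have := congrArg Fin.val h; simp [hi₁] at this; omega)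
                      (by simp [hi₁] <;> omega) (by simp [hi₁] <;> omega),
                    if_neg (by simp <;> omega), if_neg (by simp [hi₁] <;> omega)]
                  by_cases hc : (i:ℕ)+2 ≤ ℓ k'
                  · rw [dif_pos hc, hsingle, if_neg (by simp <;> omega)]
                    ring
                  · rw [dif_neg hc]
                    simp
          · rw [hN₄ k' k i' i₁ hk, hsingle, if_neg (by rintro ⟨h, -⟩; exact hk h),
              hsingle, if_neg (by rintro ⟨h, -⟩; exact hk h)]
            by_cases hc : (i:ℕ)+2 ≤ ℓ k
            · rw [dif_pos hc, hsingle, if_neg (by rintro ⟨h, -⟩; exact hk h)]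
              ring
            · rw [dif_neg hc]
              simp
      have hmkeq : E (some ⟨k, i⟩) =
          (Submodule.Quotient.mk (fun v => N v (some ⟨k, i₁⟩)) : Φ)
          - (M k i₁ i₁) • E (some ⟨k, i₁⟩)
          - (if h2 : (i:ℕ)+2 ≤ ℓ k then
              E (some ⟨k, ⟨(i:ℕ)+2, by omega⟩⟩) else 0) := by
        simp only [hEdef]
        rw [hcol_eq]
        by_cases hc : (i:ℕ)+2 ≤ ℓ k
        · rw [dif_pos hc, dif_pos hc, Submodule.Quotient.mk_add, Submodule.Quotient.mk_add,
            Submodule.Quotient.mk_smul]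
          abel
        · rw [dif_neg hc, dif_neg hc, add_zero, Submodule.Quotient.mk_add,
            Submodule.Quotient.mk_smul, sub_zero]
          abel
      rw [hmkeq, hcol0]
      refine sub_mem (sub_mem (zero_mem G) (Submodule.smul_mem G _ h1)) ?_
      by_cases hc : (i:ℕ)+2 ≤ ℓ k
      · rw [dif_pos hc]
        exact h2 _ rfl
      · rw [dif_neg hc]
        exact zero_mem G
    -- downward induction
    have hgen : ∀ (k : Fin m) (t : ℕ) (i : Fin (ℓ k + 1)), ℓ k ≤ (i:ℕ) + t →
        E (some ⟨k, i⟩) ∈ G := by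
      intro k t
      induction t with
      | zero =>
        intro i hi
        have : i = Fin.last (ℓ k) := Fin.ext (by simp [Fin.last]; have := i.isLt; omega)
        rw [this]
        exact Submodule.subset_span ⟨k, rfl⟩
      | succ t ih =>
        intro i hi
        by_cases h : ℓ k ≤ (i:ℕ) + t
        · exact ih i h
        · have hi' : (i:ℕ) < ℓ k := by omega
          apply hstep k i hi'
          · exact ih _ (by simp <;> omega)
          · intro i₂ h2
            exact ih i₂ (by omega)
    have hnone_mem : E none ∈ G := by
      rw [relS ⟨0, by omega⟩]
      exact Submodule.smul_mem G _ (Submodule.subset_span ⟨_, rfl⟩)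
    have hEmem : ∀ v, E v ∈ G := by
      intro v
      match v with
      | none => exact hnone_mem
      | some ⟨k, i⟩ => exact hgen k (ℓ k) i (by omega)
    rw [eq_top_iff]
    rintro x -
    obtain ⟨y, rfl⟩ := Submodule.Quotient.mk_surjective _ x
    have hy : y = ∑ v, y v • Pi.single v (1:ℤ) := by
      funext w
      simp only [Finset.sum_apply, Pi.smul_apply, Pi.single_apply, smul_eq_mul, mul_ite,
        mul_one, mul_zero]
      rw [Finset.sum_ite_eq Finset.univ w y]
      simp
    have hmk : (Submodule.Quotient.mk y : Φ) = ∑ v, y v • E v := by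
      have h2 : ((LinearMap.range N.mulVecLin).mkQ y : Φ) =
          ∑ v, y v • (LinearMap.range N.mulVecLin).mkQ (Pi.single v (1:ℤ)) := by
        conv_lhs => rw [hy]
        rw [map_sum]
        exact Finset.sum_congr rfl fun v _ => (LinearMap.range N.mulVecLin).mkQ.map_smul (y v) _
      exact h2
    rw [hmk]
    exact Submodule.sum_smul_mem G _ fun v _ => hEmem v
  have hkill : ∃ c : ℤ, (c : ℚ) = ((Finset.univ.lcm a : ℤ) : ℚ) ^ 2 *
      ((s₀ : ℚ) - ∑ j, (R j 0 : ℚ) / (a j : ℚ)) ∧ ∀ x : Φ, c • x = 0 := by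
    set L : ℤ := Finset.univ.lcm a with hL
    have hdvd : ∀ k, a k ∣ L := fun k => Finset.dvd_lcm (Finset.mem_univ k)
    have haz : ∀ k, (a k : ℚ) ≠ 0 := by
      intro k
      have := ha k
      intro h
      rw [show ((a k : ℤ) : ℚ) = 0 ↔ a k = 0 from Int.cast_eq_zero] at h
      omega
    choose q hq using hdvd
    refine ⟨L * L * s₀ - ∑ k, L * q k * R k 0, ?_, ?_⟩
    · push_cast
      rw [mul_sub, Finset.mul_sum]
      congr 1
      · ring
      · apply Finset.sum_congr rfl
        intro k _
        have hqQ : (L:ℚ) = (a k : ℚ) * (q k : ℚ) := by exact_mod_cast hq k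
        apply mul_left_cancel₀ (haz k)
        rw [show (a k:ℚ) * ((L:ℚ)^2 * ((R k 0 : ℚ) / (a k : ℚ))) =
          (L:ℚ)^2 * (R k 0 : ℚ) * ((a k : ℚ) / (a k : ℚ)) from by ring, div_self (haz k), mul_one]
        linear_combination (-(L:ℚ) * ((R k 0 : ℚ))) * hqQ
    · have hkg : ∀ j : Fin m,
          (L * L * s₀ - ∑ k, L * q k * R k 0) • E (some ⟨j, Fin.last (ℓ j)⟩) = 0 := by
        intro j
        rw [sub_smul, Finset.sum_smul]
        have e1 : (L * L * s₀) • E (some ⟨j, Fin.last (ℓ j)⟩) = ∑ k, (L * q j) • E (some ⟨k, 0⟩) := by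
          have h1 : (L * L * s₀) • E (some ⟨j, Fin.last (ℓ j)⟩)
              = (L * q j * s₀) • (a j • E (some ⟨j, Fin.last (ℓ j)⟩)) := by
            rw [smul_smul]
            congr 1
            linear_combination (L * s₀) * hq j
          rw [h1, ← relS j, show L * q j * s₀ = (L * q j) * s₀ from rfl, mul_smul, rel0,
            Finset.smul_sum]
        have e2 : ∀ k : Fin m, (L * q k * R k 0) • E (some ⟨j, Fin.last (ℓ j)⟩)
            = (L * q j) • E (some ⟨k, 0⟩) := by
          intro k
          calc (L * q k * R k 0) • E (some ⟨j, Fin.last (ℓ j)⟩)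
              = (q k * q j * R k 0) • (a j • E (some ⟨j, Fin.last (ℓ j)⟩)) := by
                rw [smul_smul]
                congr 1
                linear_combination (q k * R k 0) * hq j
            _ = (q k * q j * R k 0) • E none := by
                rw [← relS j]
            _ = (q k * q j) • (R k 0 • E none) := by
                rw [smul_smul]
            _ = (q k * q j) • (a k • E (some ⟨k, 0⟩)) := by rw [relR k]
            _ = (L * q j) • E (some ⟨k, 0⟩) := by
                rw [smul_smul]
                congr 1
                linear_combination (-(q j)) * hq k
        rw [e1, Finset.sum_congr rfl fun k _ => e2 k, sub_self]
      intro x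
      have hx : x ∈ Submodule.span ℤ (Set.range fun j : Fin m => E (some ⟨j, Fin.last (ℓ j)⟩)) := by
        rw [hspan]; exact Submodule.mem_top
      refine Submodule.span_induction ?_ ?_ ?_ ?_ hx
      · rintro y ⟨j, rfl⟩
        exact hkg j
      · simp
      · intro y z _ _ hy hz
        rw [smul_add, hy, hz, add_zero]
      · intro r y _ hy
        rw [smul_comm, hy, smul_zero]
  exact ⟨hspan, relS, hkill⟩
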